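/- arXiv:2203.13096 — 5 statements merged into one kernel-verified Lean document; each statement's English description precedes it below -/
import Mathlib

section
/- Let (Ω,𝒜,μ) be a σ-finite diffuse measure space and let 1 ≤ p < ∞. Then for every u ∈ L∞(μ) and every compact linear operator K on L_p(μ), one has ‖M_u + K‖ ≥ ‖M_u‖ = ‖u‖_∞; consequently the essential norm of M_u on L_p(μ) equals ‖u‖_∞. -/
open MeasureTheory Filter ENNReal

/-- A measurable set `B` is an atom of `μ`. -/
def IsAtomSet {Ω : Type*} [MeasurableSpace Ω] (μ : Measure Ω) (B : Set Ω) : Prop :=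
  MeasurableSet B ∧ 0 < μ B ∧ ∀ B' ⊆ B, MeasurableSet B' → μ B' = 0 ∨ μ B' = μ B

/-- A measure is diffuse (nonatomic) if it has no atoms. -/
def IsDiffuse {Ω : Type*} [MeasurableSpace Ω] (μ : Measure Ω) : Prop :=
  ∀ B : Set Ω, ¬ IsAtomSet μ B

set_option synthInstance.maxHeartbeats 1000000
set_option maxHeartbeats 1600000

lemma diffuse_split {Ω : Type*} [MeasurableSpace Ω] {μ : Measure Ω} (hd : IsDiffuse μ)
    {S : Set Ω} (hS : MeasurableSet S) (h0 : 0 < μ S) (hfin : μ S < ∞) :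
    ∃ B, B ⊆ S ∧ MeasurableSet B ∧ 0 < μ B ∧ 0 < μ (S \ B) := by
  have h := hd S
  rw [IsAtomSet] at h
  push_neg at h
  obtain ⟨B, hBS, hBm, hne0, hneS⟩ := h hS h0
  have hBfin : μ B ≠ ∞ := (lt_of_le_of_lt (measure_mono hBS) hfin).ne
  have hlt : μ B < μ S := lt_of_le_of_ne (measure_mono hBS) hneS
  refine ⟨B, hBS, hBm, pos_iff_ne_zero.mpr hne0, ?_⟩
  rw [measure_diff hBS hBm.nullMeasurableSet hBfin]
  exact tsub_pos_iff_lt.mpr hlt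

lemma exists_disjoint_seq {Ω : Type*} [MeasurableSpace Ω] {μ : Measure Ω} [SigmaFinite μ]
    (hd : IsDiffuse μ) {A : Set Ω} (hA : MeasurableSet A) (h0 : 0 < μ A) :
    ∃ t : ℕ → Set Ω, (∀ n, t n ⊆ A) ∧ (∀ n, MeasurableSet (t n)) ∧ (∀ n, 0 < μ (t n)) ∧
      (∀ n, μ (t n) < ∞) ∧ ∀ n m, n ≠ m → Disjoint (t n) (t m) := by
  obtain ⟨S0, hS0m, hS0A, hS0pos, hS0fin⟩ :=
    MeasureTheory.Measure.exists_subset_measure_lt_top hA h0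
  let Good := {S : Set Ω // MeasurableSet S ∧ 0 < μ S ∧ μ S < ∞}
  have hstep : ∀ S : Good, ∃ B : Set Ω, B ⊆ S.1 ∧ MeasurableSet B ∧ 0 < μ B ∧ 0 < μ (S.1 \ B) :=
    fun S => diffuse_split hd S.2.1 S.2.2.1 S.2.2.2
  choose B hBsub hBm hBpos hrest using hstep
  let next : Good → Good := fun S =>
    ⟨S.1 \ B S, S.2.1.diff (hBm S), hrest S, lt_of_le_of_lt (measure_mono Set.diff_subset) S.2.2.2⟩
  let rest : ℕ → Good := fun n => next^[n] ⟨S0, hS0m, hS0pos, hS0fin⟩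
  have hsucc : ∀ n, rest (n + 1) = next (rest n) := fun n => Function.iterate_succ_apply' next n _
  have hmono : ∀ n m, n ≤ m → (rest m).1 ⊆ (rest n).1 := by
    intro n m hnm
    induction m with
    | zero => simp_all
    | succ k ih =>
      rcases Nat.lt_or_ge n (k+1) with h | h
      · have : (rest (k+1)).1 ⊆ (rest k).1 := by
          rw [hsucc k]; exact Set.diff_subset
        exact Set.Subset.trans this (ih (Nat.lt_succ_iff.mp h))
      · have : n = k + 1 := le_antisymm hnm h
        subst this; rfl
  refine ⟨fun n => B (rest n), ?_, fun n => hBm _, fun n => hBpos _, ?_, ?_⟩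
  · intro n
    exact Set.Subset.trans (hBsub (rest n)) (Set.Subset.trans (hmono 0 n (Nat.zero_le n)) hS0A)
  · intro n
    exact lt_of_le_of_lt (measure_mono (hBsub (rest n))) (rest n).2.2.2
  · have key : ∀ n m, n < m → Disjoint (B (rest n)) (B (rest m)) := by
      intro n m hnm
      have h1 : B (rest m) ⊆ (rest (n+1)).1 := Set.Subset.trans (hBsub _) (hmono (n+1) m hnm)
      have h2 : (rest (n+1)).1 = (rest n).1 \ B (rest n) := by rw [hsucc n]
      rw [h2] at h1
      exact Set.disjoint_right.mpr fun x hx => (h1 hx).2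
    intro n m hnm
    rcases hnm.lt_or_gt with h | h
    · exact key n m h
    · exact (key m n h).symm

lemma key_lower {Ω : Type*} [MeasurableSpace Ω] {𝕜 : Type*} [RCLike 𝕜]
    (μ : Measure Ω) [SigmaFinite μ] (hdiffuse : IsDiffuse μ)
    (p : ℝ≥0∞) [Fact (1 ≤ p)] (hp : p ≠ ∞)
    (u : Ω → 𝕜) (hu : MemLp u ∞ μ)
    (Mu : Lp 𝕜 p μ →L[𝕜] Lp 𝕜 p μ)
    (hMu : ∀ f : Lp 𝕜 p μ, (Mu f : Ω → 𝕜) =ᵐ[μ] fun x => u x * f x)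
    (K : Lp 𝕜 p μ →L[𝕜] Lp 𝕜 p μ) (hK : IsCompactOperator K) :
    (eLpNorm u ∞ μ).toReal ≤ ‖Mu + K‖ := by
  set c := (eLpNorm u ∞ μ).toReal with hc
  set T := Mu + K with hT
  refine le_of_forall_pos_le_add fun ε hε => ?_
  rcases le_or_gt c ε with hce | hce
  · exact hce.trans (le_add_of_nonneg_left (norm_nonneg T))
  set c' := c - ε/2 with hc'
  have hc'pos : 0 < c' := by rw [hc']; linarith
  -- measurable representative
  have hvm : StronglyMeasurable (hu.1.mk u) := hu.1.stronglyMeasurable_mk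
  have huv : u =ᵐ[μ] hu.1.mk u := hu.1.ae_eq_mk
  set v := hu.1.mk u with hv
  set A := {x | c' ≤ ‖v x‖} with hA
  have hAm : MeasurableSet A := measurableSet_le measurable_const hvm.norm.measurable
  have hApos : 0 < μ A := by
    by_contra h
    push_neg at h
    have hA0 : μ A = 0 := le_antisymm h zero_le
    have hlt : ∀ᵐ x ∂μ, ‖v x‖ < c' := by
      rw [ae_iff]
      simpa [A, not_lt] using hA0
    have hb : ∀ᵐ x ∂μ, ‖u x‖ ≤ c' := by
      filter_upwards [huv, hlt] with x h1 h2
      rw [h1]; exact h2.le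
    have hle : eLpNorm u ∞ μ ≤ ENNReal.ofReal c' := by
      rw [eLpNorm_exponent_top]
      exact eLpNormEssSup_le_of_ae_bound hb
    have : c ≤ c' := by
      calc c ≤ (ENNReal.ofReal c').toReal := ENNReal.toReal_mono ENNReal.ofReal_ne_top hle
      _ = c' := ENNReal.toReal_ofReal hc'pos.le
    rw [hc'] at this; linarith
  obtain ⟨t, htA, htm, htpos, htfin, htdisj⟩ := exists_disjoint_seq hdiffuse hAm hApos
  have hp1 : (1:ℝ≥0∞) ≤ p := Fact.out
  have hp0 : p ≠ 0 := (lt_of_lt_of_le zero_lt_one hp1).ne'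
  have hmeaspos : ∀ k, 0 < (μ (t k)).toReal := fun k =>
    ENNReal.toReal_pos (htpos k).ne' (htfin k).ne
  set cst : ℕ → ℝ := fun k => (μ (t k)).toReal ^ (-(1 / p.toReal)) with hcst
  -- test functions
  obtain ⟨g, hgnorm, hco⟩ : ∃ g : ℕ → Lp 𝕜 p μ, (∀ k, ‖g k‖ = 1) ∧
      (∀ k, ⇑(g k) =ᵐ[μ] (t k).indicator (fun _ => ((cst k : ℝ) : 𝕜))) := by
    refine ⟨fun k => indicatorConstLp p (htm k) (htfin k).ne ((cst k : ℝ) : 𝕜), fun k => ?_,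
      fun k => indicatorConstLp_coeFn⟩
    rw [norm_indicatorConstLp hp0 hp, RCLike.norm_ofReal, hcst,
      abs_of_pos (Real.rpow_pos_of_pos (hmeaspos k) _), measureReal_def, ← Real.rpow_add (hmeaspos k)]
    simp
  -- compactness: find two close images
  have hcomp : IsCompact (closure (⇑K '' Metric.closedBall 0 1)) :=
    IsCompactOperator.isCompact_closure_image_closedBall
      (f := (K : Lp 𝕜 p μ →ₗ[𝕜] Lp 𝕜 p μ)) hK 1
  have hmem : ∀ k, K (g k) ∈ closure (⇑K '' Metric.closedBall 0 1) := fun k =>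
    subset_closure ⟨g k, by simp [Metric.mem_closedBall, hgnorm k], rfl⟩
  obtain ⟨a, -, φ, hφ, hconv⟩ := hcomp.tendsto_subseq hmem
  rw [Metric.tendsto_atTop] at hconv
  obtain ⟨N, hN⟩ := hconv (ε/4) (by linarith)
  set n := φ N with hn
  set m := φ (N+1) with hm
  have hnm : n ≠ m := (hφ (Nat.lt_succ_self N)).ne
  have hKd : ‖K (g n) - K (g m)‖ < ε/2 := by
    have h1 := hN N le_rfl
    have h2 := hN (N+1) (Nat.le_succ N)
    simp only [Function.comp_apply] at h1 h2
    calc ‖K (g n) - K (g m)‖ = dist (K (g n)) (K (g m)) := (dist_eq_norm _ _).symm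
    _ ≤ dist (K (g n)) a + dist a (K (g m)) := dist_triangle _ _ _
    _ < ε/4 + ε/4 := by rw [dist_comm a]; exact add_lt_add h1 h2
    _ = ε/2 := by ring
  -- the test element f and its representative F
  set F : Ω → 𝕜 := fun x => (t n).indicator (fun _ => ((cst n : ℝ) : 𝕜)) x
      - (t m).indicator (fun _ => ((cst m : ℝ) : 𝕜)) x with hF
  have hf_ae : ⇑(g n - g m) =ᵐ[μ] F := by
    filter_upwards [Lp.coeFn_sub (g n) (g m), hco n, hco m] with x h1 h2 h3
    rw [h1, Pi.sub_apply, h2, h3]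
  -- (i) 1 ≤ ‖g n - g m‖
  have hptw : ∀ x, ‖(t n).indicator (fun _ => ((cst n : ℝ) : 𝕜)) x‖ ≤ ‖F x‖ := by
    intro x
    by_cases hx : x ∈ t n
    · have hxm : x ∉ t m := fun h => Set.disjoint_left.mp (htdisj n m hnm) hx h
      simp [hF, Set.indicator_of_mem hx, Set.indicator_of_notMem hxm]
    · simp [Set.indicator_of_notMem hx]
  have h1 : eLpNorm (⇑(g n)) p μ ≤ eLpNorm (⇑(g n - g m)) p μ := by
    calc eLpNorm (⇑(g n)) p μ
        = eLpNorm ((t n).indicator fun _ => ((cst n : ℝ) : 𝕜)) p μ := eLpNorm_congr_ae (hco n)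
    _ ≤ eLpNorm F p μ := eLpNorm_mono_ae (Eventually.of_forall hptw)
    _ = eLpNorm (⇑(g n - g m)) p μ := (eLpNorm_congr_ae hf_ae).symm
  have hfge1 : 1 ≤ ‖g n - g m‖ := by
    have h2 := ENNReal.toReal_mono (Lp.eLpNorm_lt_top (g n - g m)).ne h1
    rw [← Lp.norm_def, ← Lp.norm_def, hgnorm n] at h2
    exact h2
  -- (ii) lower bound for Mu on f
  have hptw2 : ∀ᵐ x ∂μ, ‖(((c' : ℝ) : 𝕜) • F) x‖ ≤ ‖(fun y => u y * F y) x‖ := by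
    filter_upwards [huv] with x hx
    by_cases hxa : x ∈ t n ∪ t m
    · have hxA : x ∈ A := by
        rcases hxa with h | h
        · exact htA n h
        · exact htA m h
      have hcu : c' ≤ ‖u x‖ := by rw [hx]; exact hxA
      calc ‖(((c' : ℝ) : 𝕜) • F) x‖ = c' * ‖F x‖ := by
            simp [norm_smul, RCLike.norm_ofReal, abs_of_pos hc'pos]
      _ ≤ ‖u x‖ * ‖F x‖ := mul_le_mul_of_nonneg_right hcu (norm_nonneg _)
      _ = ‖u x * F x‖ := (norm_mul _ _).symm
    · have hFx : F x = 0 := by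
        have h1 : x ∉ t n := fun h => hxa (Or.inl h)
        have h2 : x ∉ t m := fun h => hxa (Or.inr h)
        simp [hF, Set.indicator_of_notMem h1, Set.indicator_of_notMem h2]
      simp [hFx]
  have h3 : (‖((c' : ℝ) : 𝕜)‖₊ : ℝ≥0∞) * eLpNorm (⇑(g n - g m)) p μ
      ≤ eLpNorm (⇑(Mu (g n - g m))) p μ := by
    have h4 : eLpNorm (((c' : ℝ) : 𝕜) • F) p μ ≤ eLpNorm (fun y => u y * F y) p μ :=
      eLpNorm_mono_ae hptw2
    rw [eLpNorm_const_smul] at h4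
    have h5 : eLpNorm (fun y => u y * F y) p μ = eLpNorm (⇑(Mu (g n - g m))) p μ := by
      apply eLpNorm_congr_ae
      filter_upwards [hMu (g n - g m), hf_ae] with x hx1 hx2
      rw [hx1, hx2]
    have h6 : eLpNorm F p μ = eLpNorm (⇑(g n - g m)) p μ := (eLpNorm_congr_ae hf_ae).symm
    rw [h5, h6] at h4
    exact h4
  have hMul : c' * ‖g n - g m‖ ≤ ‖Mu (g n - g m)‖ := by
    have h7 := ENNReal.toReal_mono (Lp.eLpNorm_lt_top (Mu (g n - g m))).ne h3
    rw [ENNReal.toReal_mul, ENNReal.coe_toReal, coe_nnnorm, RCLike.norm_ofReal,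
      abs_of_pos hc'pos, ← Lp.norm_def, ← Lp.norm_def] at h7
    exact h7
  -- (iii) conclusion
  have hKf : ‖K (g n - g m)‖ < ε/2 := by rw [map_sub]; exact hKd
  have hTf : Mu (g n - g m) = T (g n - g m) - K (g n - g m) := by
    rw [hT]; simp
  have hTnorm : ‖Mu (g n - g m)‖ ≤ ‖T‖ * ‖g n - g m‖ + ε/2 := by
    calc ‖Mu (g n - g m)‖ = ‖T (g n - g m) - K (g n - g m)‖ := by rw [hTf]
    _ ≤ ‖T (g n - g m)‖ + ‖K (g n - g m)‖ := norm_sub_le _ _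
    _ ≤ ‖T‖ * ‖g n - g m‖ + ε/2 := add_le_add (T.le_opNorm _) hKf.le
  have hfpos : (0:ℝ) < ‖g n - g m‖ := lt_of_lt_of_le one_pos hfge1
  have hkey : c' * ‖g n - g m‖ ≤ (‖T‖ + ε/2) * ‖g n - g m‖ := by
    have : ‖T‖ * ‖g n - g m‖ + ε/2 ≤ ‖T‖ * ‖g n - g m‖ + (ε/2) * ‖g n - g m‖ := by
      nlinarith
    calc c' * ‖g n - g m‖ ≤ ‖Mu (g n - g m)‖ := hMul
    _ ≤ ‖T‖ * ‖g n - g m‖ + ε/2 := hTnorm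
    _ ≤ ‖T‖ * ‖g n - g m‖ + (ε/2) * ‖g n - g m‖ := this
    _ = (‖T‖ + ε/2) * ‖g n - g m‖ := by ring
  have hfin : c' ≤ ‖T‖ + ε/2 := (mul_le_mul_iff_left₀ hfpos).mp hkey
  rw [hc'] at hfin; linarith

theorem stmt1 {Ω : Type*} [MeasurableSpace Ω] {𝕜 : Type*} [RCLike 𝕜]
    (μ : Measure Ω) [SigmaFinite μ] (hdiffuse : IsDiffuse μ)
    (p : ℝ≥0∞) [Fact (1 ≤ p)] (hp : p ≠ ∞)
    (u : Ω → 𝕜) (hu : MemLp u ∞ μ)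
    (Mu : Lp 𝕜 p μ →L[𝕜] Lp 𝕜 p μ)
    (hMu : ∀ f : Lp 𝕜 p μ, (Mu f : Ω → 𝕜) =ᵐ[μ] fun x => u x * f x) :
    (∀ K : Lp 𝕜 p μ →L[𝕜] Lp 𝕜 p μ, IsCompactOperator K → ‖Mu + K‖ ≥ ‖Mu‖) ∧
    ‖Mu‖ = (eLpNorm u ∞ μ).toReal ∧
    sInf {r : ℝ | ∃ K : Lp 𝕜 p μ →L[𝕜] Lp 𝕜 p μ, IsCompactOperator K ∧ r = ‖Mu + K‖}
      = (eLpNorm u ∞ μ).toReal := by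
  have hupper : ‖Mu‖ ≤ (eLpNorm u ∞ μ).toReal := by
    refine ContinuousLinearMap.opNorm_le_bound _ ENNReal.toReal_nonneg fun f => ?_
    have h1 : eLpNorm (⇑(Mu f)) p μ = eLpNorm (u • ⇑f) p μ := by
      apply eLpNorm_congr_ae
      filter_upwards [hMu f] with x hx
      simpa [Pi.smul_apply', smul_eq_mul] using hx
    have h2 := eLpNorm_smul_le_eLpNorm_top_mul_eLpNorm p (Lp.aestronglyMeasurable f) u
    rw [← h1] at h2
    calc ‖Mu f‖ = (eLpNorm (⇑(Mu f)) p μ).toReal := Lp.norm_def _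
    _ ≤ (eLpNorm u ∞ μ * eLpNorm (⇑f) p μ).toReal :=
      ENNReal.toReal_mono (ENNReal.mul_ne_top hu.2.ne (Lp.eLpNorm_lt_top f).ne) h2
    _ = (eLpNorm u ∞ μ).toReal * ‖f‖ := by rw [ENNReal.toReal_mul, Lp.norm_def]
  have h0 : IsCompactOperator (⇑(0 : Lp 𝕜 p μ →L[𝕜] Lp 𝕜 p μ)) := by
    have : ⇑(0 : Lp 𝕜 p μ →L[𝕜] Lp 𝕜 p μ) = (0 : Lp 𝕜 p μ → Lp 𝕜 p μ) := rfl
    rw [this]; exact isCompactOperator_zero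
  have hlow : (eLpNorm u ∞ μ).toReal ≤ ‖Mu‖ := by
    have := key_lower μ hdiffuse p hp u hu Mu hMu 0 h0
    rwa [add_zero] at this
  have heq : ‖Mu‖ = (eLpNorm u ∞ μ).toReal := le_antisymm hupper hlow
  refine ⟨fun K hK => heq ▸ key_lower μ hdiffuse p hp u hu Mu hMu K hK, heq, ?_⟩
  apply le_antisymm
  · exact csInf_le ⟨(eLpNorm u ∞ μ).toReal, by
        rintro r ⟨K, hK, rfl⟩; exact key_lower μ hdiffuse p hp u hu Mu hMu K hK⟩
      ⟨0, h0, by rw [add_zero, heq]⟩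
  · refine le_csInf ⟨‖Mu + 0‖, 0, h0, rfl⟩ ?_
    rintro r ⟨K, hK, rfl⟩
    exact key_lower μ hdiffuse p hp u hu Mu hMu K hK
end

section
/- Let (Ω,𝒜,μ) be a σ-finite measure space, 1 ≤ p < ∞, and let (B_n)_{n∈ℕ} be pairwise disjoint measurable sets with Ω = ⋃_{n∈ℕ} B_n, where each B_n is either an atom of μ or a μ-null set. Let u ∈ L∞(μ) and for each n let c_n be a scalar with u = c_n a.e. on B_n, with c_n := 0 whenever μ(B_n) = 0. Then the essential norm of the multiplication operator M_u on L_p(μ) equals limsup_{n→∞} |c_n|. -/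
open MeasureTheory Filter ENNReal Topology

set_option maxHeartbeats 1000000
set_option synthInstance.maxHeartbeats 400000

section Aux

variable {Ω : Type*} [MeasurableSpace Ω]

lemma aux_atom_finite (μ : Measure Ω) [SigmaFinite μ] {B : Set Ω} (hB : IsAtomSet μ B) :
    μ B ≠ ∞ := by
  obtain ⟨hBm, hB0, hBa⟩ := hB
  have hdir : Directed (· ⊆ ·) (fun n => B ∩ spanningSets μ n) := by
    intro a b
    refine ⟨max a b, ?_, ?_⟩ <;>
      exact Set.inter_subset_inter_right _ (monotone_spanningSets μ (by simp))
  have hU : (⋃ n, B ∩ spanningSets μ n) = B := by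
    rw [← Set.inter_iUnion, iUnion_spanningSets, Set.inter_univ]
  have h1 : μ (⋃ n, B ∩ spanningSets μ n) = ⨆ n, μ (B ∩ spanningSets μ n) :=
    hdir.measure_iUnion
  rw [hU] at h1
  have h2 : ∃ n, 0 < μ (B ∩ spanningSets μ n) := by
    by_contra h
    push_neg at h
    simp only [le_zero_iff] at h
    rw [h1] at hB0
    simp [h] at hB0
  obtain ⟨n, hn⟩ := h2
  rcases hBa _ Set.inter_subset_left (hBm.inter (measurableSet_spanningSets μ n)) with h | h
  · exact absurd h hn.ne'
  · rw [← h]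
    exact (lt_of_le_of_lt (measure_mono Set.inter_subset_right)
      (measure_spanningSets_lt_top μ n)).ne

lemma aux_ae_const_real (ν : Measure Ω) [IsFiniteMeasure ν] (hν : ν Set.univ ≠ 0)
    (hatom : ∀ s : Set Ω, MeasurableSet s → ν s = 0 ∨ ν s = ν Set.univ)
    {f : Ω → ℝ} (hf : Measurable f) : ∃ a : ℝ, ∀ᵐ x ∂ν, f x = a := by
  set m := ν Set.univ with hm
  have hkey : ∀ t : ℝ, ν {x | f x ≤ t} = 0 ∨ ν {x | f x ≤ t} = m :=
    fun t => hatom _ (hf measurableSet_Iic)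
  set T : Set ℝ := {t | ν {x | f x ≤ t} = m} with hT
  have hmono : ∀ {t t' : ℝ}, t ∈ T → t ≤ t' → t' ∈ T := by
    intro t t' ht htt'
    rcases hkey t' with h | h
    · exfalso
      apply hν
      have ht' : ν {x | f x ≤ t} = m := ht
      rw [← ht']
      refine le_antisymm ?_ zero_le
      rw [← h]
      exact measure_mono (fun x hx => le_trans hx htt')
    · exact h
  have hTne : T.Nonempty := by
    by_contra h
    rw [Set.not_nonempty_iff_eq_empty] at h
    have h0 : ∀ t : ℝ, ν {x | f x ≤ t} = 0 := by
      intro t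
      rcases hkey t with h' | h'
      · exact h'
      · exact absurd (show t ∈ T from h') (by simp [h])
    apply hν
    have : (Set.univ : Set Ω) ⊆ ⋃ n : ℕ, {x | f x ≤ (n : ℝ)} := by
      intro x _
      obtain ⟨n, hn⟩ := exists_nat_ge (f x)
      exact Set.mem_iUnion.mpr ⟨n, hn⟩
    refine le_antisymm ?_ zero_le
    calc ν Set.univ ≤ ν (⋃ n : ℕ, {x | f x ≤ (n : ℝ)}) := measure_mono this
    _ ≤ ∑' n : ℕ, ν {x | f x ≤ (n : ℝ)} := measure_iUnion_le _
    _ = 0 := by simp [h0]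
  have hTbdd : BddBelow T := by
    by_contra h
    have hmem : ∀ n : ℕ, ν {x | f x ≤ -(n : ℝ)} = m := by
      intro n
      rw [not_bddBelow_iff] at h
      obtain ⟨t, ht, htn⟩ := h (-(n : ℝ))
      exact hmono ht htn.le
    have hI : (⋂ n : ℕ, {x | f x ≤ -(n : ℝ)}) = ∅ := by
      ext x
      simp only [Set.mem_iInter, Set.mem_setOf_eq, Set.mem_empty_iff_false, iff_false, not_forall,
        not_le]
      obtain ⟨n, hn⟩ := exists_nat_gt (-f x)
      exact ⟨n, by linarith⟩
    have htend := tendsto_measure_iInter_atTop (μ := ν)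
      (s := fun n : ℕ => {x | f x ≤ -(n : ℝ)})
      (fun n : ℕ => (hf measurableSet_Iic).nullMeasurableSet)
      (fun a b hab x hx => show f x ≤ -(a : ℝ) from
        le_trans (show f x ≤ -(b : ℝ) from hx) (neg_le_neg (Nat.cast_le.mpr hab)))
      ⟨0, measure_ne_top ν _⟩
    rw [hI] at htend
    have : Tendsto (fun _ : ℕ => m) atTop (𝓝 (ν (∅ : Set Ω))) := by
      refine htend.congr fun n => ?_
      exact (hmem n)
    have := tendsto_nhds_unique this tendsto_const_nhds
    rw [measure_empty] at this
    exact hν this.symm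
  set a := sInf T with ha
  have h1 : ν {x | f x < a} = 0 := by
    have hsub : {x | f x < a} ⊆ ⋃ n : ℕ, {x | f x ≤ a - 1 / (n + 1)} := by
      intro x hx
      have hx' : f x < a := hx
      obtain ⟨n, hn⟩ := exists_nat_one_div_lt (sub_pos.mpr hx')
      exact Set.mem_iUnion.mpr ⟨n, show f x ≤ a - 1 / (n + 1) by push_cast at hn ⊢; linarith⟩
    refine le_antisymm ?_ zero_le
    calc ν {x | f x < a} ≤ ν (⋃ n : ℕ, {x | f x ≤ a - 1 / (n + 1)}) := measure_mono hsub
    _ ≤ ∑' n : ℕ, ν {x | f x ≤ a - 1 / (n + 1)} := measure_iUnion_le _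
    _ = 0 := by
        refine Summable.tsum_eq_zero_iff ENNReal.summable |>.mpr fun n => ?_
        rcases hkey (a - 1 / (n + 1)) with h | h
        · exact h
        · exfalso
          have : a ≤ a - 1 / (n + 1) := csInf_le hTbdd h
          have hpos : (0:ℝ) < 1 / (n + 1) := by positivity
          linarith
  have h2 : ν {x | a < f x} = 0 := by
    have hup : ∀ ε : ℝ, 0 < ε → ν {x | a + ε < f x} = 0 := by
      intro ε hε
      obtain ⟨t, ht, htε⟩ := (csInf_lt_iff hTbdd hTne).mp (lt_add_of_pos_right a hε)
      have hmem : (a + ε) ∈ T := hmono ht htε.le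
      have hcompl : {x | a + ε < f x} = {x | f x ≤ a + ε}ᶜ := by
        ext x; simp [not_le]
      rw [hcompl, measure_compl (show MeasurableSet {x | f x ≤ a + ε} from hf measurableSet_Iic)
        (measure_ne_top ν _), ← hm, hmem, tsub_self]
    have hsub : {x | a < f x} ⊆ ⋃ n : ℕ, {x | a + 1 / (n + 1) < f x} := by
      intro x hx
      have hx' : a < f x := hx
      obtain ⟨n, hn⟩ := exists_nat_one_div_lt (sub_pos.mpr hx')
      exact Set.mem_iUnion.mpr ⟨n, show a + 1 / (n + 1) < f x by push_cast at hn ⊢; linarith⟩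
    refine le_antisymm ?_ zero_le
    calc ν {x | a < f x} ≤ ν (⋃ n : ℕ, {x | a + 1 / (n + 1) < f x}) := measure_mono hsub
    _ ≤ ∑' n : ℕ, ν {x | a + 1 / (n + 1) < f x} := measure_iUnion_le _
    _ = 0 := by
        refine Summable.tsum_eq_zero_iff ENNReal.summable |>.mpr fun n => hup _ (by positivity)
  refine ⟨a, ?_⟩
  have : {x | ¬ f x = a} ⊆ {x | f x < a} ∪ {x | a < f x} := by
    intro x hx
    rcases lt_or_gt_of_ne (hx : f x ≠ a) with h | h
    · exact Or.inl h
    · exact Or.inr h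
  exact measure_mono_null this (by
    refine le_antisymm ?_ zero_le
    calc ν _ ≤ ν {x | f x < a} + ν {x | a < f x} := measure_union_le _ _
    _ = 0 := by rw [h1, h2, add_zero])

lemma aux_ae_const {𝕜 : Type*} [RCLike 𝕜] (ν : Measure Ω) [IsFiniteMeasure ν]
    (hν : ν Set.univ ≠ 0)
    (hatom : ∀ s : Set Ω, MeasurableSet s → ν s = 0 ∨ ν s = ν Set.univ)
    {f : Ω → 𝕜} (hf : AEStronglyMeasurable f ν) : ∃ a : 𝕜, ∀ᵐ x ∂ν, f x = a := by
  obtain ⟨g, hg, hfg⟩ := hf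
  have hre : Measurable fun x => RCLike.re (g x) :=
    (RCLike.continuous_re.comp_stronglyMeasurable hg).measurable
  have him : Measurable fun x => RCLike.im (g x) :=
    (RCLike.continuous_im.comp_stronglyMeasurable hg).measurable
  obtain ⟨a, ha⟩ := aux_ae_const_real ν hν hatom hre
  obtain ⟨b, hb⟩ := aux_ae_const_real ν hν hatom him
  refine ⟨(a : 𝕜) + (b : 𝕜) * RCLike.I, ?_⟩
  filter_upwards [ha, hb, hfg] with x ha' hb' hfg'
  rw [hfg', ← RCLike.re_add_im (g x), ha', hb']

end Aux


section Aux2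

variable {Ω : Type*} [MeasurableSpace Ω] {𝕜 : Type*} [RCLike 𝕜]

lemma aux_coeFn_sum {E : Type*} [NormedAddCommGroup E] {p : ℝ≥0∞} {μ : Measure Ω}
    (s : Finset ℕ) (f : ℕ → Lp E p μ) :
    (↑↑(∑ i ∈ s, f i) : Ω → E) =ᵐ[μ] fun x => ∑ i ∈ s, (f i : Ω → E) x := by
  classical
  induction s using Finset.induction_on with
  | empty => simp only [Finset.sum_empty]; exact Lp.coeFn_zero E p μ
  | insert a s' hns ih =>
    rw [Finset.sum_insert hns]
    filter_upwards [Lp.coeFn_add (f a) (∑ i ∈ s', f i), ih] with x hx1 hx2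
    simp only [Finset.sum_insert hns, hx1, Pi.add_apply, hx2]

lemma aux_compact_of_range {E F : Type*} [NormedAddCommGroup E] [NormedAddCommGroup F]
    [NormedSpace 𝕜 E] [NormedSpace 𝕜 F] (T : E →L[𝕜] F) (W : Submodule 𝕜 F)
    [FiniteDimensional 𝕜 W] (hT : ∀ x, T x ∈ W) : IsCompactOperator T := by
  haveI : ProperSpace W := FiniteDimensional.proper 𝕜 W
  refine ⟨(↑) '' (Metric.closedBall (0 : W) ‖T‖),
    (isCompact_closedBall _ _).image continuous_subtype_val, ?_⟩
  refine Filter.mem_of_superset (Metric.ball_mem_nhds 0 one_pos) ?_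
  intro x hx
  refine ⟨⟨T x, hT x⟩, ?_, rfl⟩
  rw [Metric.mem_closedBall, dist_zero_right]
  calc ‖(⟨T x, hT x⟩ : W)‖ = ‖T x‖ := rfl
  _ ≤ ‖T‖ * ‖x‖ := T.le_opNorm x
  _ ≤ ‖T‖ * 1 := by
      have : ‖x‖ < 1 := by simpa [dist_zero_right] using hx
      exact mul_le_mul_of_nonneg_left this.le (norm_nonneg T)
  _ = ‖T‖ := mul_one _

lemma aux_mul_op (μ : Measure Ω) (p : ℝ≥0∞) [Fact (1 ≤ p)]
    {v : Ω → 𝕜} (hv : AEStronglyMeasurable v μ) {C : ℝ} (hC : 0 ≤ C)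
    (hvC : ∀ᵐ x ∂μ, ‖v x‖ ≤ C) :
    ∃ T : Lp 𝕜 p μ →L[𝕜] Lp 𝕜 p μ, ‖T‖ ≤ C ∧
      ∀ f : Lp 𝕜 p μ, (T f : Ω → 𝕜) =ᵐ[μ] fun x => v x * f x := by
  have hbnd : ∀ f : Lp 𝕜 p μ,
      eLpNorm (fun x => v x * (f : Ω → 𝕜) x) p μ ≤ (‖C‖₊ : ℝ≥0∞) * eLpNorm (f : Ω → 𝕜) p μ := by
    intro f
    calc eLpNorm (fun x => v x * (f : Ω → 𝕜) x) p μ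
        ≤ eLpNorm (C • (f : Ω → 𝕜)) p μ := by
          refine eLpNorm_mono_ae ?_
          filter_upwards [hvC] with x hx
          rw [Pi.smul_apply, norm_mul, norm_smul, Real.norm_of_nonneg hC]
          exact mul_le_mul_of_nonneg_right hx (norm_nonneg _)
    _ = (‖C‖₊ : ℝ≥0∞) * eLpNorm (f : Ω → 𝕜) p μ := eLpNorm_const_smul _ _ _ _
  have hmem : ∀ f : Lp 𝕜 p μ, MemLp (fun x => v x * (f : Ω → 𝕜) x) p μ := by
    intro f
    refine ⟨hv.mul (Lp.aestronglyMeasurable f), lt_of_le_of_lt (hbnd f) ?_⟩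
    exact ENNReal.mul_lt_top ENNReal.coe_lt_top (Lp.eLpNorm_lt_top f)
  let L : Lp 𝕜 p μ →ₗ[𝕜] Lp 𝕜 p μ :=
    { toFun := fun f => (hmem f).toLp _
      map_add' := by
        intro f g
        refine Lp.ext ?_
        filter_upwards [(hmem (f + g)).coeFn_toLp, (hmem f).coeFn_toLp, (hmem g).coeFn_toLp,
          Lp.coeFn_add f g, Lp.coeFn_add ((hmem f).toLp _) ((hmem g).toLp _)] with x h1 h2 h3 h4 h5
        rw [h1, h5, Pi.add_apply, h2, h3, h4, Pi.add_apply, mul_add]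
      map_smul' := by
        intro a f
        refine Lp.ext ?_
        filter_upwards [(hmem (a • f)).coeFn_toLp, (hmem f).coeFn_toLp,
          Lp.coeFn_smul a f, Lp.coeFn_smul a ((hmem f).toLp _)] with x h1 h2 h3 h4
        rw [RingHom.id_apply, h1, h4, Pi.smul_apply, h2, h3, Pi.smul_apply, smul_eq_mul,
          smul_eq_mul]
        ring }
  refine ⟨L.mkContinuous C ?_, L.mkContinuous_norm_le hC _, ?_⟩
  · intro f
    show ‖(hmem f).toLp _‖ ≤ C * ‖f‖
    rw [Lp.norm_toLp, Lp.norm_def]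
    calc (eLpNorm (fun x => v x * (f : Ω → 𝕜) x) p μ).toReal
        ≤ ((‖C‖₊ : ℝ≥0∞) * eLpNorm (f : Ω → 𝕜) p μ).toReal := by
          refine ENNReal.toReal_mono ?_ (hbnd f)
          exact ENNReal.mul_ne_top ENNReal.coe_ne_top (Lp.eLpNorm_ne_top f)
    _ = C * (eLpNorm (f : Ω → 𝕜) p μ).toReal := by
          rw [ENNReal.toReal_mul, ENNReal.coe_toReal, coe_nnnorm, Real.norm_of_nonneg hC]
  · intro f
    exact (hmem f).coeFn_toLp


end Aux2

theorem stmt2 {Ω : Type*} [MeasurableSpace Ω] {𝕜 : Type*} [RCLike 𝕜]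
    (μ : Measure Ω) [SigmaFinite μ]
    (p : ℝ≥0∞) [Fact (1 ≤ p)] (hp : p ≠ ∞)
    (B : ℕ → Set Ω) (hBmeas : ∀ n, MeasurableSet (B n))
    (hBdisj : Pairwise (Function.onFun Disjoint B)) (hBunion : (⋃ n, B n) = Set.univ)
    (hBatom : ∀ n, IsAtomSet μ (B n) ∨ μ (B n) = 0)
    (u : Ω → 𝕜) (hu : MemLp u ∞ μ)
    (c : ℕ → 𝕜) (hc : ∀ n, ∀ᵐ x ∂μ.restrict (B n), u x = c n)
    (hc0 : ∀ n, μ (B n) = 0 → c n = 0)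
    (Mu : Lp 𝕜 p μ →L[𝕜] Lp 𝕜 p μ)
    (hMu : ∀ f : Lp 𝕜 p μ, (Mu f : Ω → 𝕜) =ᵐ[μ] fun x => u x * f x) :
    sInf {r : ℝ | ∃ K : Lp 𝕜 p μ →L[𝕜] Lp 𝕜 p μ, IsCompactOperator K ∧ r = ‖Mu + K‖}
      = Filter.limsup (fun n => ‖c n‖) Filter.atTop := by
  classical
  set S := {r : ℝ | ∃ K : Lp 𝕜 p μ →L[𝕜] Lp 𝕜 p μ, IsCompactOperator K ∧ r = ‖Mu + K‖}
    with hSdef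
  set L := Filter.limsup (fun n => ‖c n‖) Filter.atTop with hLdef
  have hp0 : p ≠ 0 := by
    have h1 := Fact.out (p := 1 ≤ p)
    intro h; rw [h] at h1; exact (by simp at h1)
  have hfin : ∀ n, μ (B n) ≠ ∞ := fun n =>
    (hBatom n).elim (fun h => aux_atom_finite μ h) (fun h => by rw [h]; exact ENNReal.zero_ne_top)
  have hCb : ∀ n, ‖c n‖ ≤ (eLpNorm u ∞ μ).toReal := by
    intro n
    by_cases h0 : μ (B n) = 0
    · rw [hc0 n h0, norm_zero]; exact ENNReal.toReal_nonneg
    · have hne : eLpNormEssSup u μ ≠ ∞ := by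
        rw [← eLpNorm_exponent_top]; exact hu.2.ne
      have hub : ∀ᵐ x ∂μ, ‖u x‖ ≤ (eLpNorm u ∞ μ).toReal := by
        filter_upwards [ae_le_eLpNormEssSup (f := u) (μ := μ)] with x hx
        rw [eLpNorm_exponent_top]
        calc ‖u x‖ = ((‖u x‖₊ : ℝ≥0∞)).toReal := by simp
        _ ≤ (eLpNormEssSup u μ).toReal := ENNReal.toReal_mono hne hx
      have hb : ∀ᵐ x ∂μ.restrict (B n), u x = c n ∧ ‖u x‖ ≤ (eLpNorm u ∞ μ).toReal :=
        (hc n).and (ae_restrict_of_ae hub)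
      haveI : (ae (μ.restrict (B n))).NeBot := by
        rw [ae_neBot]
        intro h
        exact h0 (by rw [← Measure.restrict_apply_univ, h]; rfl)
      obtain ⟨x, hx1, hx2⟩ := hb.exists
      rw [← hx1]; exact hx2
  have hbddA : IsBoundedUnder (· ≤ ·) atTop (fun n => ‖c n‖) :=
    Filter.isBoundedUnder_of ⟨(eLpNorm u ∞ μ).toReal, hCb⟩
  have hbddB : IsBoundedUnder (· ≥ ·) atTop (fun n => ‖c n‖) :=
    Filter.isBoundedUnder_of ⟨0, fun n => norm_nonneg _⟩
  have hL0 : 0 ≤ L :=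
    Filter.le_limsup_of_frequently_le
      ((Filter.Eventually.of_forall fun n => norm_nonneg (c n)).frequently) hbddA
  have hSbdd : BddBelow S := ⟨0, fun r hr => by
    obtain ⟨K, _, rfl⟩ := hr; exact norm_nonneg _⟩
  have hSne : S.Nonempty := ⟨‖Mu‖, 0, isCompactOperator_zero, by rw [add_zero]⟩
  have hae : ∀ᵐ x ∂μ, ∀ n, x ∈ B n → u x = c n := by
    rw [ae_all_iff]; intro n; exact (ae_restrict_iff' (hBmeas n)).mp (hc n)
  have hmemB : ∀ x : Ω, ∃ n, x ∈ B n := fun x =>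
    Set.mem_iUnion.mp (show x ∈ ⋃ n, B n by rw [hBunion]; exact Set.mem_univ x)
  refine le_antisymm ?_ ?_
  · -- upper bound : sInf S ≤ L
    refine le_of_forall_pos_le_add fun ε hε => ?_
    have hev := Filter.eventually_lt_of_limsup_lt (lt_add_of_pos_right L hε) hbddA
    obtain ⟨N, hN⟩ := Filter.eventually_atTop.mp hev
    set Tset : Set Ω := ⋃ n, ⋃ (_ : N ≤ n), B n with hTsetdef
    have hTmeas : MeasurableSet Tset :=
      MeasurableSet.iUnion fun n => MeasurableSet.iUnion fun _ => hBmeas n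
    set v : Ω → 𝕜 := Tset.indicator u with hvdef
    have hvm : AEStronglyMeasurable v μ := hu.1.indicator hTmeas
    have hLε0 : (0:ℝ) ≤ L + ε := by linarith
    have hvb : ∀ᵐ x ∂μ, ‖v x‖ ≤ L + ε := by
      filter_upwards [hae] with x hx
      by_cases hxT : x ∈ Tset
      · rw [hvdef, Set.indicator_of_mem hxT]
        obtain ⟨n, hn, hxB⟩ := Set.mem_iUnion₂.mp hxT
        rw [hx n hxB]
        exact (hN n hn).le
      · rw [hvdef, Set.indicator_of_notMem hxT, norm_zero]; exact hLε0
    obtain ⟨Tv, hTvnorm, hTvapp⟩ := aux_mul_op μ p hvm hLε0 hvb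
    set K := Tv - Mu with hKdef
    set eF : ℕ → Lp 𝕜 p μ := fun n => indicatorConstLp p (hBmeas n) (hfin n) (1:𝕜) with heF
    have hWfin : Set.Finite (eF '' Set.Iio N) := (Set.finite_Iio N).image eF
    set W := Submodule.span 𝕜 (eF '' Set.Iio N) with hWdef
    haveI : FiniteDimensional 𝕜 W := FiniteDimensional.span_of_finite 𝕜 hWfin
    have hrange : ∀ f : Lp 𝕜 p μ, K f ∈ W := by
      intro f
      have hconst : ∀ n : ℕ, ∃ a : 𝕜,
          ∀ᵐ x ∂μ.restrict (B n), (v x - u x) * (f : Ω → 𝕜) x = a := by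
        intro n
        rcases hBatom n with hA | h0
        · haveI : IsFiniteMeasure (μ.restrict (B n)) :=
            ⟨by rw [Measure.restrict_apply_univ]; exact (hfin n).lt_top⟩
          refine aux_ae_const _ ?_ ?_ ?_
          · rw [Measure.restrict_apply_univ]; exact hA.2.1.ne'
          · intro s hs
            rw [Measure.restrict_apply hs, Measure.restrict_apply_univ]
            exact hA.2.2 _ Set.inter_subset_right (hs.inter hA.1)
          · exact ((hvm.sub hu.1).mul (Lp.aestronglyMeasurable f)).restrict
        · refine ⟨0, ?_⟩
          rw [Measure.restrict_eq_zero.mpr h0, MeasureTheory.ae_zero]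
          exact Filter.eventually_bot
      choose a ha using hconst
      have hae2 : ∀ᵐ x ∂μ, ∀ n, x ∈ B n → (v x - u x) * (f : Ω → 𝕜) x = a n := by
        rw [ae_all_iff]; intro n; exact (ae_restrict_iff' (hBmeas n)).mp (ha n)
      have hKf : (K f : Ω → 𝕜) =ᵐ[μ]
          fun x => ∑ n ∈ Finset.range N, (B n).indicator (fun _ => a n) x := by
        have hKapp : K f = Tv f - Mu f := rfl
        rw [hKapp]
        filter_upwards [Lp.coeFn_sub (Tv f) (Mu f), hTvapp f, hMu f, hae2] with x h1 h2 h3 hx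
        rw [h1, Pi.sub_apply, h2, h3]
        obtain ⟨m, hm⟩ := hmemB x
        by_cases hmN : m < N
        · have hlhs : v x * (f : Ω → 𝕜) x - u x * (f : Ω → 𝕜) x
              = (v x - u x) * (f : Ω → 𝕜) x := by ring
          rw [hlhs, hx m hm]
          rw [Finset.sum_eq_single_of_mem m (Finset.mem_range.mpr hmN)]
          · rw [Set.indicator_of_mem hm]
          · intro n _ hnm
            exact Set.indicator_of_notMem (Set.disjoint_left.mp (hBdisj hnm).symm hm) _
        · have hxT : x ∈ Tset := Set.mem_iUnion.mpr ⟨m, Set.mem_iUnion.mpr ⟨not_lt.mp hmN, hm⟩⟩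
          have hvx : v x = u x := Set.indicator_of_mem hxT u
          rw [hvx, sub_self]
          rw [Finset.sum_eq_zero]
          intro n hn
          have hnm : n ≠ m := by
            intro h; rw [h] at hn; exact hmN (Finset.mem_range.mp hn)
          exact Set.indicator_of_notMem (Set.disjoint_left.mp (hBdisj hnm).symm hm) _
      have hind : ∀ n : ℕ, ((a n • eF n : Lp 𝕜 p μ) : Ω → 𝕜)
          =ᵐ[μ] (B n).indicator (fun _ => a n) := by
        intro n
        filter_upwards [Lp.coeFn_smul (a n) (eF n), indicatorConstLp_coeFn
          (p := p) (hs := hBmeas n) (hμs := hfin n) (c := (1:𝕜))] with x h1 h2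
        rw [h1, Pi.smul_apply, h2]
        by_cases hx : x ∈ B n
        · rw [Set.indicator_of_mem hx, Set.indicator_of_mem hx, smul_eq_mul, mul_one]
        · rw [Set.indicator_of_notMem hx, Set.indicator_of_notMem hx, smul_eq_mul, mul_zero]
      have hKsum : K f = ∑ n ∈ Finset.range N, a n • eF n := by
        refine Lp.ext ?_
        filter_upwards [hKf, aux_coeFn_sum (Finset.range N) (fun n => a n • eF n),
          ae_all_iff.mpr hind] with x h1 h2 h3
        rw [h1, h2]
        exact Finset.sum_congr rfl fun n _ => (h3 n).symm
      rw [hKsum]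
      refine Submodule.sum_mem W fun n hn => Submodule.smul_mem _ _ ?_
      exact Submodule.subset_span ⟨n, Finset.mem_range.mp hn, rfl⟩
    have hKcomp : IsCompactOperator (K : Lp 𝕜 p μ →L[𝕜] Lp 𝕜 p μ) :=
      aux_compact_of_range K W hrange
    have hMuK : Mu + K = Tv := by rw [hKdef]; abel
    calc sInf S ≤ ‖Mu + K‖ := csInf_le hSbdd ⟨K, hKcomp, rfl⟩
    _ = ‖Tv‖ := by rw [hMuK]
    _ ≤ L + ε := hTvnorm
  · -- lower bound : L ≤ sInf S
    refine le_csInf hSne ?_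
    rintro r ⟨K, hK, rfl⟩
    refine le_of_forall_pos_le_add fun δ hδ => ?_
    by_cases hcase : L - δ/2 ≤ 0
    · have := norm_nonneg (Mu + K); linarith
    push_neg at hcase
    set b := L - δ/2 with hbdef
    have hbpos : 0 < b := hcase
    have hfreq : ∃ᶠ n in atTop, b < ‖c n‖ :=
      Filter.frequently_lt_of_lt_limsup hbddB.isCoboundedUnder_le (by rw [← hLdef, hbdef]; linarith)
    have hAinf : {n : ℕ | b < ‖c n‖}.Infinite := Nat.frequently_atTop_iff_infinite.mp hfreq
    have hApos : ∀ n, b < ‖c n‖ → 0 < μ (B n) := by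
      intro n hn
      rcases hBatom n with h | h
      · exact h.2.1
      · exfalso; rw [hc0 n h, norm_zero] at hn; linarith
    set rr : ℕ → ℝ := fun n => (μ (B n)).toReal ^ (1 / p.toReal) with hrrdef
    have hrpos : ∀ n, b < ‖c n‖ → 0 < rr n := fun n hn =>
      Real.rpow_pos_of_pos (ENNReal.toReal_pos (hApos n hn).ne' (hfin n)) _
    set ee : ℕ → Lp 𝕜 p μ :=
      fun n => ((rr n)⁻¹ : ℝ) • (indicatorConstLp p (hBmeas n) (hfin n) (1:𝕜)) with heedef
    have hnorm_e : ∀ n, b < ‖c n‖ → ‖ee n‖ = 1 := by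
      intro n hn
      rw [heedef, norm_smul, norm_indicatorConstLp hp0 hp, norm_one, one_mul,
        Real.norm_eq_abs, abs_of_nonneg (inv_nonneg.mpr (hrpos n hn).le)]
      exact inv_mul_cancel₀ (hrpos n hn).ne'
    obtain ⟨Kset, hKsetc, hKpre⟩ := hK
    obtain ⟨ρ, hρ, hball⟩ := Metric.mem_nhds_iff.mp hKpre
    set σ := Set.Infinite.natEmbedding _ hAinf with hσdef
    have hσmem : ∀ k : ℕ, b < ‖c ((σ k : ℕ))‖ := fun k => (σ k).2
    have hy : ∀ k : ℕ, K ((ρ/2) • ee ((σ k : ℕ))) ∈ Kset := by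
      intro k
      apply hball
      rw [Metric.mem_ball, dist_zero_right]
      calc ‖(ρ/2) • ee ((σ k : ℕ))‖ = (ρ/2) * ‖ee ((σ k : ℕ))‖ := by
            rw [norm_smul, Real.norm_eq_abs, abs_of_nonneg (by linarith)]
      _ = ρ/2 := by rw [hnorm_e _ (hσmem k), mul_one]
      _ < ρ := by linarith
    obtain ⟨z, _, φ, hφ, hφtend⟩ := hKsetc.tendsto_subseq hy
    rw [Metric.tendsto_atTop] at hφtend
    obtain ⟨M, hM⟩ := hφtend ((ρ/2) * (δ/2) / 2) (by positivity)
    set n := ((σ (φ M) : ℕ)) with hndef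
    set m := ((σ (φ (M+1)) : ℕ)) with hmdef
    have hnm : n ≠ m := by
      intro h
      have h3 := σ.injective (Subtype.ext h)
      have h4 := hφ (show M < M + 1 by omega)
      omega
    have hnA : b < ‖c n‖ := hσmem (φ M)
    have hmA : b < ‖c m‖ := hσmem (φ (M+1))
    have hKsmall : ‖K (ee n - ee m)‖ < δ/2 := by
      have h1 := hM M (le_refl M)
      have h2 := hM (M+1) (by omega)
      have h3 : dist (K ((ρ/2) • ee n)) (K ((ρ/2) • ee m)) < (ρ/2) * (δ/2) :=
        calc dist (K ((ρ/2) • ee n)) (K ((ρ/2) • ee m))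
            ≤ dist (K ((ρ/2) • ee n)) z + dist (K ((ρ/2) • ee m)) z := dist_triangle_right _ _ _
        _ < (ρ/2) * (δ/2) / 2 + (ρ/2) * (δ/2) / 2 := add_lt_add h1 h2
        _ = (ρ/2) * (δ/2) := by ring
      rw [dist_eq_norm, ← map_sub, ← smul_sub, K.map_smul_of_tower, norm_smul, Real.norm_eq_abs,
        abs_of_nonneg (by linarith : (0:ℝ) ≤ ρ/2)] at h3
      have hρ2 : (0:ℝ) < ρ/2 := by linarith
      nlinarith [norm_nonneg (K (ee n - ee m))]
    set d := ee n - ee m with hddef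
    have hdesc : ∀ᵐ x ∂μ, (d : Ω → 𝕜) x
        = (rr n)⁻¹ • (B n).indicator (fun _ => (1:𝕜)) x
          - (rr m)⁻¹ • (B m).indicator (fun _ => (1:𝕜)) x := by
      filter_upwards [Lp.coeFn_sub (ee n) (ee m),
        Lp.coeFn_smul ((rr n)⁻¹ : ℝ) (indicatorConstLp p (hBmeas n) (hfin n) (1:𝕜)),
        Lp.coeFn_smul ((rr m)⁻¹ : ℝ) (indicatorConstLp p (hBmeas m) (hfin m) (1:𝕜)),
        indicatorConstLp_coeFn (p := p) (hs := hBmeas n) (hμs := hfin n) (c := (1:𝕜)),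
        indicatorConstLp_coeFn (p := p) (hs := hBmeas m) (hμs := hfin m) (c := (1:𝕜))]
        with x h1 h2 h3 h4 h5
      rw [hddef, h1, Pi.sub_apply]
      simp only [heedef]
      rw [h2, h3, Pi.smul_apply, Pi.smul_apply, h4, h5]
    have hd1 : 1 ≤ ‖d‖ := by
      have hmono : eLpNorm (⇑d) p (μ.restrict (B n)) ≤ eLpNorm (⇑d) p μ :=
        eLpNorm_mono_measure (⇑d) Measure.restrict_le_self
      have hdBn : ⇑d =ᵐ[μ.restrict (B n)] fun _ => ((rr n)⁻¹ : ℝ) • (1:𝕜) := by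
        filter_upwards [ae_restrict_of_ae hdesc, ae_restrict_mem (hBmeas n)] with x hdx hxn
        have hxm : x ∉ B m := Set.disjoint_left.mp (hBdisj hnm) hxn
        rw [hdx, Set.indicator_of_mem hxn, Set.indicator_of_notMem hxm, smul_zero, sub_zero]
      have hν0 : μ.restrict (B n) ≠ 0 := by
        intro h
        exact (hApos n hnA).ne' (Measure.restrict_eq_zero.mp h)
      have hconst : eLpNorm (⇑d) p (μ.restrict (B n))
          = (‖((rr n)⁻¹ : ℝ) • (1:𝕜)‖₊ : ℝ≥0∞) * (μ (B n)) ^ (1 / p.toReal) := by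
        rw [eLpNorm_congr_ae hdBn, eLpNorm_const _ hp0 hν0, Measure.restrict_apply_univ, enorm_eq_nnnorm]
      have htoreal : (eLpNorm (⇑d) p (μ.restrict (B n))).toReal = 1 := by
        rw [hconst, ENNReal.toReal_mul, ENNReal.coe_toReal, coe_nnnorm, norm_smul, norm_one,
          mul_one, Real.norm_eq_abs, abs_of_nonneg (inv_nonneg.mpr (hrpos n hnA).le),
          ← ENNReal.toReal_rpow]
        exact inv_mul_cancel₀ (hrpos n hnA).ne'
      calc (1:ℝ) = (eLpNorm (⇑d) p (μ.restrict (B n))).toReal := htoreal.symm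
      _ ≤ (eLpNorm (⇑d) p μ).toReal :=
          ENNReal.toReal_mono (Lp.eLpNorm_ne_top d) hmono
      _ = ‖d‖ := (Lp.norm_def d).symm
    have hMud : b * ‖d‖ ≤ ‖Mu d‖ := by
      have hmono : eLpNorm (b • ⇑d) p μ ≤ eLpNorm (⇑(Mu d)) p μ := by
        refine eLpNorm_mono_ae ?_
        filter_upwards [hdesc, hae, hMu d] with x hdx hx h3
        rw [h3, Pi.smul_apply, norm_smul, Real.norm_eq_abs, abs_of_nonneg hbpos.le, norm_mul]
        by_cases hxn : x ∈ B n
        · have : b ≤ ‖u x‖ := by rw [hx n hxn]; exact hnA.le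
          exact mul_le_mul_of_nonneg_right this (norm_nonneg _)
        · by_cases hxm : x ∈ B m
          · have : b ≤ ‖u x‖ := by rw [hx m hxm]; exact hmA.le
            exact mul_le_mul_of_nonneg_right this (norm_nonneg _)
          · have : (d : Ω → 𝕜) x = 0 := by
              rw [hdx, Set.indicator_of_notMem hxn, Set.indicator_of_notMem hxm,
                smul_zero, smul_zero, sub_zero]
            rw [this, norm_zero, mul_zero, mul_zero]
      have hsm : eLpNorm (⇑(b • d)) p μ = eLpNorm (b • ⇑d) p μ :=
        eLpNorm_congr_ae (Lp.coeFn_smul b d)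
      have : ‖b • d‖ ≤ ‖Mu d‖ := by
        rw [Lp.norm_def, Lp.norm_def, hsm]
        exact ENNReal.toReal_mono (Lp.eLpNorm_ne_top _) hmono
      rwa [norm_smul, Real.norm_eq_abs, abs_of_nonneg hbpos.le] at this
    have hdpos : 0 < ‖d‖ := lt_of_lt_of_le one_pos hd1
    have hchain : b * ‖d‖ ≤ ‖Mu + K‖ * ‖d‖ + (δ/2) * ‖d‖ := by
      calc b * ‖d‖ ≤ ‖Mu d‖ := hMud
      _ ≤ ‖(Mu + K) d‖ + ‖K d‖ := by
          have : Mu d = (Mu + K) d - K d := by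
            rw [ContinuousLinearMap.add_apply]; abel
          rw [this]
          exact norm_sub_le _ _
      _ ≤ ‖Mu + K‖ * ‖d‖ + ‖K d‖ := by
          have := (Mu + K).le_opNorm d
          linarith
      _ ≤ ‖Mu + K‖ * ‖d‖ + (δ/2) * ‖d‖ := by
          have h1 : ‖K d‖ ≤ δ/2 := hKsmall.le
          have h2 : δ/2 ≤ (δ/2) * ‖d‖ := by nlinarith
          linarith
    have hfinal : b ≤ ‖Mu + K‖ + δ/2 := by
      have := (mul_le_mul_iff_left₀ hdpos).mp (by linarith : b * ‖d‖ ≤ (‖Mu + K‖ + δ/2) * ‖d‖)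
      exact this
    rw [hbdef] at hfinal
    linarith
end

section
/- Let (Ω,𝒜,μ) be a σ-finite diffuse measure space, 1 ≤ p < ∞, and let q be the conjugate exponent (1/p + 1/q = 1). Let η ∈ L_q(μ) and g ∈ L_p(μ) with η ≥ 0 and g ≥ 0, and define the positive rank-one operator K on L_p(μ) by K f := (∫ η f dμ) · g. If u ∈ L∞(μ) with u ≥ 0 is such that M_u f ≤ K f for all f ∈ L_p(μ) with f ≥ 0, then u = 0 (a.e.). -/
open MeasureTheory Filter ENNReal

lemma half_lemma {Ω : Type*} [MeasurableSpace Ω] {μ : Measure Ω} (hd : IsDiffuse μ)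
    {A : Set Ω} (hA : MeasurableSet A) (h0 : 0 < μ A) (hfin : μ A < ∞) :
    ∃ B ⊆ A, MeasurableSet B ∧ 0 < μ B ∧ μ B ≤ μ A * 2⁻¹ := by
  have := hd A
  rw [IsAtomSet] at this
  push_neg at this
  obtain ⟨B', hB'sub, hB'meas, hB'ne0, hB'neA⟩ := this hA h0
  have hB'le : μ B' ≤ μ A := measure_mono hB'sub
  by_cases hc : μ B' ≤ μ A * 2⁻¹
  · exact ⟨B', hB'sub, hB'meas, pos_iff_ne_zero.mpr hB'ne0, hc⟩
  · push_neg at hc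
    refine ⟨A \ B', Set.diff_subset, hA.diff hB'meas, ?_, ?_⟩
    · have hd' : μ (A \ B') = μ A - μ B' :=
        measure_diff hB'sub hB'meas.nullMeasurableSet (lt_of_le_of_lt hB'le hfin).ne
      rw [hd']
      exact tsub_pos_of_lt (lt_of_le_of_ne hB'le hB'neA)
    · have hd' : μ (A \ B') = μ A - μ B' :=
        measure_diff hB'sub hB'meas.nullMeasurableSet (lt_of_le_of_lt hB'le hfin).ne
      rw [hd', tsub_le_iff_right]
      calc μ A = μ A * 2⁻¹ + μ A * 2⁻¹ := by
            rw [← mul_add, ENNReal.inv_two_add_inv_two, mul_one]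
        _ ≤ μ A * 2⁻¹ + μ B' := by gcongr

lemma small_lemma {Ω : Type*} [MeasurableSpace Ω] {μ : Measure Ω} (hd : IsDiffuse μ)
    {A : Set Ω} (hA : MeasurableSet A) (h0 : 0 < μ A) (hfin : μ A < ∞)
    {δ : ℝ≥0∞} (hδ : δ ≠ 0) :
    ∃ B ⊆ A, MeasurableSet B ∧ 0 < μ B ∧ μ B < δ := by
  have key : ∀ n : ℕ, ∃ B ⊆ A, MeasurableSet B ∧ 0 < μ B ∧ μ B ≤ μ A * 2⁻¹ ^ n := by
    intro n
    induction n with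
    | zero => exact ⟨A, subset_rfl, hA, h0, by simp⟩
    | succ n ih =>
      obtain ⟨B, hBA, hBm, hB0, hBle⟩ := ih
      have hBfin : μ B < ∞ := lt_of_le_of_lt hBle (by
        calc μ A * 2⁻¹ ^ n ≤ μ A * 1 := by
              gcongr
              exact pow_le_one' (by norm_num) n
          _ < ∞ := by simpa using hfin)
      obtain ⟨C, hCB, hCm, hC0, hCle⟩ := half_lemma hd hBm hB0 hBfin
      refine ⟨C, hCB.trans hBA, hCm, hC0, ?_⟩
      calc μ C ≤ μ B * 2⁻¹ := hCle
        _ ≤ μ A * 2⁻¹ ^ n * 2⁻¹ := by gcongr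
        _ = μ A * 2⁻¹ ^ (n + 1) := by rw [pow_succ, mul_assoc]
  -- choose n with μ A * 2⁻¹ ^ n < δ
  obtain ⟨n, hn⟩ : ∃ n : ℕ, μ A * 2⁻¹ ^ n < δ := by
    have h1 : Tendsto (fun n : ℕ => μ A * 2⁻¹ ^ n) atTop (nhds (μ A * 0)) := by
      refine ENNReal.Tendsto.const_mul ?_ (Or.inr hfin.ne)
      exact ENNReal.tendsto_pow_atTop_nhds_zero_of_lt_one (by norm_num)
    rw [mul_zero] at h1
    have := (h1.eventually_lt_const (pos_iff_ne_zero.mpr hδ)).exists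
    exact this
  obtain ⟨B, hBA, hBm, hB0, hBle⟩ := key n
  exact ⟨B, hBA, hBm, hB0, lt_of_le_of_lt hBle hn⟩

theorem stmt3 {Ω : Type*} [MeasurableSpace Ω]
    (μ : Measure Ω) [SigmaFinite μ] (hdiffuse : IsDiffuse μ)
    (p q : ℝ≥0∞) (hp1 : 1 ≤ p) (hp : p ≠ ∞) (hpq : 1 / p + 1 / q = 1)
    (η : Ω → ℝ) (hη : MemLp η q μ) (hη0 : 0 ≤ᵐ[μ] η)
    (g : Ω → ℝ) (hg : MemLp g p μ) (hg0 : 0 ≤ᵐ[μ] g)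
    (u : Ω → ℝ) (hu : MemLp u ∞ μ) (hu0 : 0 ≤ᵐ[μ] u)
    (hle : ∀ f : Ω → ℝ, MemLp f p μ → 0 ≤ᵐ[μ] f →
      ∀ᵐ x ∂μ, u x * f x ≤ (∫ y, η y * f y ∂μ) * g x) :
    u =ᵐ[μ] 0 := by
  -- measurable representatives
  set u' := hu.1.mk u with hu'def
  have hu'm : Measurable u' := hu.1.stronglyMeasurable_mk.measurable
  have hueq : u =ᵐ[μ] u' := hu.1.ae_eq_mk
  set g' := hg.1.mk g with hg'def
  have hg'm : Measurable g' := hg.1.stronglyMeasurable_mk.measurable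
  have hgeq : g =ᵐ[μ] g' := hg.1.ae_eq_mk
  -- the candidate sets
  set A : ℕ → Set Ω := fun k =>
    ({x | 1 / ((k : ℝ) + 1) ≤ u' x} ∩ {x | g' x ≤ (k : ℝ)}) ∩ spanningSets μ k with hAdef
  have hAm : ∀ k, MeasurableSet (A k) := fun k =>
    ((measurableSet_le measurable_const hu'm).inter
      (measurableSet_le hg'm measurable_const)).inter (measurableSet_spanningSets μ k)
  by_cases hnull : ∀ k, μ (A k) = 0
  · -- then u = 0 a.e.
    have hUnull : μ (⋃ k, A k) = 0 := measure_iUnion_null hnull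
    have h1 : ∀ᵐ x ∂μ, x ∉ ⋃ k, A k := by
      rw [ae_iff]
      simp only [not_not, Set.mem_iUnion, Set.setOf_exists, Set.setOf_mem_eq]
      exact measure_iUnion_null hnull
    filter_upwards [h1, hueq, hu0] with x hx hux hx0
    show u x = 0
    by_contra hne
    have hupos : 0 < u' x := hux ▸ lt_of_le_of_ne hx0 (Ne.symm hne)
    exfalso
    -- find k
    obtain ⟨k₁, hk₁⟩ := exists_nat_one_div_lt hupos
    obtain ⟨k₂, hk₂⟩ := exists_nat_ge (g' x)
    obtain ⟨k₃, hk₃⟩ := Set.mem_iUnion.mp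
      ((iUnion_spanningSets μ).symm ▸ Set.mem_univ x)
    set k := max k₁ (max k₂ k₃) with hk
    refine hx (Set.mem_iUnion.mpr ⟨k, ?_, ?_⟩)
    · constructor
      · have : 1 / ((k : ℝ) + 1) ≤ 1 / ((k₁ : ℝ) + 1) := by
          apply one_div_le_one_div_of_le (by positivity)
          have : (k₁ : ℝ) ≤ k := Nat.cast_le.mpr (le_max_left _ _)
          linarith
        exact this.trans hk₁.le
      · have : (k₂ : ℝ) ≤ k := Nat.cast_le.mpr ((le_max_left _ _).trans (le_max_right _ _))
        exact le_trans hk₂ this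
    · exact monotone_spanningSets μ ((le_max_right k₂ k₃).trans (le_max_right _ _)) hk₃
  · -- some A k has positive measure
    push_neg at hnull
    obtain ⟨k, hk⟩ := hnull
    exfalso
    set ε : ℝ := 1 / ((k : ℝ) + 1) with hεdef
    have hε : 0 < ε := by positivity
    set M : ℝ := (k : ℝ) with hMdef
    have hM0 : 0 ≤ M := Nat.cast_nonneg k
    have hApos : 0 < μ (A k) := pos_iff_ne_zero.mpr hk
    have hAfin : μ (A k) < ∞ :=
      lt_of_le_of_lt (measure_mono Set.inter_subset_right) (measure_spanningSets_lt_top μ k)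
    -- η is integrable on A k
    have hq1 : 1 ≤ q := by
      have h1 : 1 / q ≤ 1 / p + 1 / q := le_add_self
      rw [hpq] at h1
      rwa [one_div, ENNReal.inv_le_one] at h1
    haveI : Fact (μ (A k) < ∞) := ⟨hAfin⟩
    have hint : Integrable η (μ.restrict (A k)) :=
      memLp_one_iff_integrable.mp ((hη.restrict (A k)).mono_exponent hq1)
    have hlint : ∫⁻ x, ‖η x‖₊ ∂(μ.restrict (A k)) ≠ ∞ := hint.2.ne
    -- absolute continuity: choose δ
    have hεnn : ENNReal.ofReal (ε / (M + 1)) ≠ 0 := by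
      simp only [ne_eq, ENNReal.ofReal_eq_zero, not_le]
      positivity
    obtain ⟨δ, hδ0, hδ⟩ := exists_pos_setLIntegral_lt_of_measure_lt hlint hεnn
    -- small subset B
    obtain ⟨B, hBA, hBm, hB0, hBδ⟩ := small_lemma hdiffuse (hAm k) hApos hAfin (δ := δ) hδ0.ne'
    have hBfin : μ B < ∞ := lt_of_le_of_lt (measure_mono hBA) hAfin
    have hBres : (μ.restrict (A k)) B < δ := by
      rw [Measure.restrict_apply hBm, Set.inter_eq_self_of_subset_left hBA]
      exact hBδ
    have hsmall : ∫⁻ x in B, ‖η x‖₊ ∂(μ.restrict (A k)) < ENNReal.ofReal (ε / (M + 1)) :=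
      hδ B hBres
    rw [Measure.restrict_restrict hBm, Set.inter_eq_self_of_subset_left hBA] at hsmall
    -- the test function
    set f : Ω → ℝ := B.indicator (fun _ => (1:ℝ)) with hfdef
    have hfmem : MemLp f p μ := memLp_indicator_const p hBm (1:ℝ) (Or.inr hBfin.ne)
    have hf0 : 0 ≤ᵐ[μ] f := ae_of_all _ fun x => Set.indicator_nonneg (fun _ _ => zero_le_one) x
    have hae := hle f hfmem hf0
    -- compute the integral constant c
    set c : ℝ := ∫ y, η y * f y ∂μ with hcdef
    have hceq : c = ∫ y in B, η y ∂μ := by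
      rw [hcdef, ← integral_indicator hBm]
      congr 1
      funext y
      by_cases hy : y ∈ B <;> simp [hfdef, Set.indicator_of_mem, Set.indicator_of_notMem, hy]
    have hc0 : 0 ≤ c := by
      rw [hceq]
      exact setIntegral_nonneg_ae hBm (hη0.mono fun x hx _ => hx)
    have hclt : c < ε / (M + 1) := by
      have h1 : c ≤ ∫ y in B, ‖η y‖ ∂μ := by
        rw [hceq]
        calc ∫ y in B, η y ∂μ ≤ ‖∫ y in B, η y ∂μ‖ :=
              (le_abs_self _).trans_eq (Real.norm_eq_abs _).symm
          _ ≤ ∫ y in B, ‖η y‖ ∂μ := norm_integral_le_integral_norm _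
      have h2 : ∫ y in B, ‖η y‖ ∂μ = (∫⁻ y in B, ‖η y‖₊ ∂μ).toReal := by
        rw [integral_norm_eq_lintegral_enorm]
        · rfl
        exact (hη.1.restrict)
      have h3 : (∫⁻ y in B, ‖η y‖₊ ∂μ).toReal < ε / (M + 1) := by
        have := ENNReal.toReal_lt_toReal (ne_of_lt (lt_of_lt_of_le hsmall le_top)) ENNReal.ofReal_ne_top |>.mpr hsmall
        rwa [ENNReal.toReal_ofReal (by positivity)] at this
      calc c ≤ _ := h1
        _ = _ := h2
        _ < _ := h3
    -- find a point in B where everything holds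
    have hres : μ.restrict B ≠ 0 := by
      simp [Measure.restrict_eq_zero, hB0.ne']
    haveI : (ae (μ.restrict B)).NeBot := ae_neBot.mpr hres
    have hall : ∀ᵐ x ∂(μ.restrict B),
        x ∈ B ∧ u x * f x ≤ c * g x ∧ u x = u' x ∧ g x = g' x := by
      refine (ae_restrict_mem hBm).and (ae_restrict_of_ae ?_)
      filter_upwards [hae, hueq, hgeq] with x h1 h2 h3
      exact ⟨h1, h2, h3⟩
    obtain ⟨x, hxB, hxle, hxu, hxg⟩ := hall.exists
    have hxA : x ∈ A k := hBA hxB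
    have hxu' : ε ≤ u' x := hxA.1.1
    have hxg' : g' x ≤ M := hxA.1.2
    have hfx : f x = 1 := Set.indicator_of_mem hxB _
    rw [hfx, mul_one, hxu, hxg] at hxle
    have : ε ≤ c * M := le_trans hxu' (hxle.trans (by gcongr))
    have hfin2 : c * M ≤ c * (M + 1) := by nlinarith
    have : ε < ε := lt_of_le_of_lt (this.trans hfin2) ((lt_div_iff₀ (by positivity)).mp hclt)
    exact lt_irrefl _ this
end

section
/- Let (Ω,𝒜,μ) be a σ-finite measure space, 1 ≤ p < ∞, and let (B_n)_{n∈ℕ} be pairwise disjoint measurable sets with Ω = ⋃_{n∈ℕ} B_n, where each B_n is either an atom of μ or a μ-null set. Let u ∈ L∞(μ) and let K be a compact linear operator on L_p(μ). For each n let P_n denote multiplication by 1_{B_n}, and let d_n be the scalar such that P_n K P_n = d_n P_n (with d_n := 0 if μ(B_n) = 0). Let v := Σ_{n∈ℕ} d_n 1_{B_n} ∈ L∞(μ). Then ‖M_u + K‖ ≥ ‖M_u + M_v‖. -/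
open MeasureTheory Filter ENNReal

theorem stmt9 {Ω : Type*} [MeasurableSpace Ω] {𝕜 : Type*} [RCLike 𝕜]
    (μ : Measure Ω) [SigmaFinite μ]
    (p : ℝ≥0∞) [Fact (1 ≤ p)] (hp : p ≠ ∞)
    (B : ℕ → Set Ω) (hBmeas : ∀ n, MeasurableSet (B n))
    (hBdisj : Pairwise (Function.onFun Disjoint B)) (hBunion : (⋃ n, B n) = Set.univ)
    (hBatom : ∀ n, IsAtomSet μ (B n) ∨ μ (B n) = 0)
    (u : Ω → 𝕜) (hu : MemLp u ∞ μ)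
    (Mu : Lp 𝕜 p μ →L[𝕜] Lp 𝕜 p μ)
    (hMu : ∀ f : Lp 𝕜 p μ, (Mu f : Ω → 𝕜) =ᵐ[μ] fun x => u x * f x)
    (K : Lp 𝕜 p μ →L[𝕜] Lp 𝕜 p μ) (hK : IsCompactOperator K)
    (P : ℕ → (Lp 𝕜 p μ →L[𝕜] Lp 𝕜 p μ))
    (hP : ∀ n, ∀ f : Lp 𝕜 p μ, (P n f : Ω → 𝕜) =ᵐ[μ] (B n).indicator f)
    (d : ℕ → 𝕜) (hd : ∀ n, P n ∘L K ∘L P n = d n • P n)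
    (hd0 : ∀ n, μ (B n) = 0 → d n = 0)
    (v : Ω → 𝕜) (hv : ∀ n, ∀ x ∈ B n, v x = d n) (hvL : MemLp v ∞ μ)
    (Mv : Lp 𝕜 p μ →L[𝕜] Lp 𝕜 p μ)
    (hMv : ∀ f : Lp 𝕜 p μ, (Mv f : Ω → 𝕜) =ᵐ[μ] fun x => v x * f x) :
    ‖Mu + K‖ ≥ ‖Mu + Mv‖ := by
  have hp1 : (1 : ℝ≥0∞) ≤ p := Fact.out
  have hp0 : p ≠ 0 := (lt_of_lt_of_le zero_lt_one hp1).ne'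
  obtain ⟨q, hqdef⟩ : ∃ q : ℝ, p.toReal = q := ⟨p.toReal, rfl⟩
  have hq : 0 < q := hqdef ▸ ENNReal.toReal_pos hp0 hp
  set C : NNReal := ‖Mu + K‖₊ with hC
  -- For an Lp element h, the lintegral of ‖h‖^q equals (eLpNorm h)^q
  have key : ∀ h : Lp 𝕜 p μ, ∫⁻ x, (‖h x‖₊ : ℝ≥0∞) ^ q ∂μ = (eLpNorm (h : Ω → 𝕜) p μ) ^ q := by
    intro h
    rw [eLpNorm_eq_lintegral_rpow_enorm_toReal hp0 hp, hqdef, one_div, ENNReal.rpow_inv_rpow hq.ne']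
    rfl
  -- lintegral of ‖indicator‖^q equals set lintegral
  have ind : ∀ (s : Set Ω), MeasurableSet s → ∀ (w : Ω → 𝕜),
      ∫⁻ x, (‖s.indicator w x‖₊ : ℝ≥0∞) ^ q ∂μ = ∫⁻ x in s, (‖w x‖₊ : ℝ≥0∞) ^ q ∂μ := by
    intro s hs w
    rw [← lintegral_indicator hs]
    refine lintegral_congr fun x => ?_
    by_cases hx : x ∈ s
    · simp [Set.indicator_of_mem hx]
    · simp [Set.indicator_of_notMem hx, ENNReal.zero_rpow_of_pos hq]
  -- the Lp-element nnnorm as eLpNorm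
  have nn : ∀ h : Lp 𝕜 p μ, (‖h‖₊ : ℝ≥0∞) = eLpNorm (h : Ω → 𝕜) p μ := by
    intro h
    rw [Lp.nnnorm_def, ENNReal.coe_toNNReal (Lp.eLpNorm_ne_top h)]
  rw [ge_iff_le]
  refine ContinuousLinearMap.opNorm_le_bound _ (norm_nonneg _) fun f => ?_
  -- a.e. description of (Mu + Mv) f
  have hg : ((Mu + Mv) f : Ω → 𝕜) =ᵐ[μ] fun x => (u x + v x) * f x := by
    have heq : (Mu + Mv) f = Mu f + Mv f := rfl
    rw [heq]
    filter_upwards [Lp.coeFn_add (Mu f) (Mv f), hMu f, hMv f] with x h1 h2 h3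
    simp only [h1, Pi.add_apply, h2, h3]
    ring
  -- a.e. description of P n ((Mu + K) (P n f))
  have hw : ∀ n, ((P n ((Mu + K) (P n f)) : Lp 𝕜 p μ) : Ω → 𝕜)
      =ᵐ[μ] (B n).indicator (fun x => (u x + v x) * f x) := by
    intro n
    have e3 : P n (K (P n f)) = d n • P n f := by
      have := DFunLike.congr_fun (hd n) f
      simpa using this
    have heq : P n ((Mu + K) (P n f)) = P n (Mu (P n f)) + d n • P n f := by
      have : (Mu + K) (P n f) = Mu (P n f) + K (P n f) := rfl
      rw [this, map_add, e3]
    rw [heq]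
    filter_upwards [Lp.coeFn_add (P n (Mu (P n f))) (d n • P n f),
      Lp.coeFn_smul (d n) (P n f), hP n (Mu (P n f)), hMu (P n f), hP n f]
      with x h1 h2 h3 h4 h5
    simp only [Pi.add_apply] at h1
    rw [h1, h2, h3]
    by_cases hx : x ∈ B n
    · rw [Set.indicator_of_mem hx, Set.indicator_of_mem hx, h4,
        Pi.smul_apply, smul_eq_mul, h5, Set.indicator_of_mem hx, hv n x hx]
      ring
    · rw [Set.indicator_of_notMem hx, Set.indicator_of_notMem hx,
        Pi.smul_apply, smul_eq_mul, h5, Set.indicator_of_notMem hx, mul_zero, add_zero]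
  -- per-block estimate
  have step : ∀ n, ∫⁻ x in B n, (‖(u x + v x) * f x‖₊ : ℝ≥0∞) ^ q ∂μ
      ≤ (C : ℝ≥0∞) ^ q * ∫⁻ x in B n, (‖f x‖₊ : ℝ≥0∞) ^ q ∂μ := by
    intro n
    have e1 : ∫⁻ x in B n, (‖(u x + v x) * f x‖₊ : ℝ≥0∞) ^ q ∂μ
        = ((‖P n ((Mu + K) (P n f))‖₊ : ℝ≥0∞)) ^ q := by
      calc ∫⁻ x in B n, (‖(u x + v x) * f x‖₊ : ℝ≥0∞) ^ q ∂μ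
          = ∫⁻ x, (‖(B n).indicator (fun x => (u x + v x) * f x) x‖₊ : ℝ≥0∞) ^ q ∂μ :=
            (ind (B n) (hBmeas n) _).symm
        _ = ∫⁻ x, (‖(P n ((Mu + K) (P n f)) : Ω → 𝕜) x‖₊ : ℝ≥0∞) ^ q ∂μ := by
            refine lintegral_congr_ae ?_
            filter_upwards [hw n] with x hx
            rw [hx]
        _ = (eLpNorm ((P n ((Mu + K) (P n f)) : Lp 𝕜 p μ) : Ω → 𝕜) p μ) ^ q := key _
        _ = ((‖P n ((Mu + K) (P n f))‖₊ : ℝ≥0∞)) ^ q := by rw [nn]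
    have e2 : (‖P n ((Mu + K) (P n f))‖₊ : ℝ≥0∞) ≤ (C : ℝ≥0∞) * ‖P n f‖₊ := by
      rw [nn, eLpNorm_congr_ae (hP n ((Mu + K) (P n f)))]
      calc eLpNorm ((B n).indicator (((Mu + K) (P n f) : Lp 𝕜 p μ) : Ω → 𝕜)) p μ
          ≤ eLpNorm (((Mu + K) (P n f) : Lp 𝕜 p μ) : Ω → 𝕜) p μ := eLpNorm_indicator_le _
        _ = (‖(Mu + K) (P n f)‖₊ : ℝ≥0∞) := (nn _).symm
        _ ≤ (C : ℝ≥0∞) * ‖P n f‖₊ := by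
            rw [← ENNReal.coe_mul]
            exact_mod_cast ContinuousLinearMap.le_opNNNorm (Mu + K) (P n f)
    have e4 : ((‖P n f‖₊ : ℝ≥0∞)) ^ q = ∫⁻ x in B n, (‖f x‖₊ : ℝ≥0∞) ^ q ∂μ := by
      calc ((‖P n f‖₊ : ℝ≥0∞)) ^ q = (eLpNorm ((P n f : Lp 𝕜 p μ) : Ω → 𝕜) p μ) ^ q := by rw [nn]
        _ = ∫⁻ x, (‖(P n f : Ω → 𝕜) x‖₊ : ℝ≥0∞) ^ q ∂μ := (key _).symm
        _ = ∫⁻ x, (‖(B n).indicator (f : Ω → 𝕜) x‖₊ : ℝ≥0∞) ^ q ∂μ := by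
            refine lintegral_congr_ae ?_
            filter_upwards [hP n f] with x hx
            rw [hx]
        _ = ∫⁻ x in B n, (‖f x‖₊ : ℝ≥0∞) ^ q ∂μ := ind (B n) (hBmeas n) _
    calc ∫⁻ x in B n, (‖(u x + v x) * f x‖₊ : ℝ≥0∞) ^ q ∂μ
        = ((‖P n ((Mu + K) (P n f))‖₊ : ℝ≥0∞)) ^ q := e1
      _ ≤ ((C : ℝ≥0∞) * ‖P n f‖₊) ^ q := ENNReal.rpow_le_rpow e2 hq.le
      _ = (C : ℝ≥0∞) ^ q * ((‖P n f‖₊ : ℝ≥0∞)) ^ q := ENNReal.mul_rpow_of_nonneg _ _ hq.le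
      _ = (C : ℝ≥0∞) ^ q * ∫⁻ x in B n, (‖f x‖₊ : ℝ≥0∞) ^ q ∂μ := by rw [e4]
  -- sum over the partition
  have split : ∀ w : Ω → ℝ≥0∞, ∫⁻ x, w x ∂μ = ∑' n, ∫⁻ x in B n, w x ∂μ := by
    intro w
    rw [← lintegral_iUnion hBmeas hBdisj w, hBunion, Measure.restrict_univ]
  have total : ∫⁻ x, (‖((Mu + Mv) f : Ω → 𝕜) x‖₊ : ℝ≥0∞) ^ q ∂μ
      ≤ (C : ℝ≥0∞) ^ q * ∫⁻ x, (‖f x‖₊ : ℝ≥0∞) ^ q ∂μ := by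
    calc ∫⁻ x, (‖((Mu + Mv) f : Ω → 𝕜) x‖₊ : ℝ≥0∞) ^ q ∂μ
        = ∫⁻ x, (‖(u x + v x) * f x‖₊ : ℝ≥0∞) ^ q ∂μ := by
          refine lintegral_congr_ae ?_
          filter_upwards [hg] with x hx
          rw [hx]
      _ = ∑' n, ∫⁻ x in B n, (‖(u x + v x) * f x‖₊ : ℝ≥0∞) ^ q ∂μ := split _
      _ ≤ ∑' n, (C : ℝ≥0∞) ^ q * ∫⁻ x in B n, (‖f x‖₊ : ℝ≥0∞) ^ q ∂μ :=
          ENNReal.tsum_le_tsum step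
      _ = (C : ℝ≥0∞) ^ q * ∑' n, ∫⁻ x in B n, (‖f x‖₊ : ℝ≥0∞) ^ q ∂μ := ENNReal.tsum_mul_left
      _ = (C : ℝ≥0∞) ^ q * ∫⁻ x, (‖f x‖₊ : ℝ≥0∞) ^ q ∂μ := by rw [split]
  have final : eLpNorm (((Mu + Mv) f : Lp 𝕜 p μ) : Ω → 𝕜) p μ
      ≤ (C : ℝ≥0∞) * eLpNorm (f : Ω → 𝕜) p μ := by
    have h1 : eLpNorm (((Mu + Mv) f : Lp 𝕜 p μ) : Ω → 𝕜) p μ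
        = (∫⁻ x, (‖((Mu + Mv) f : Ω → 𝕜) x‖₊ : ℝ≥0∞) ^ q ∂μ) ^ (q⁻¹) := by
      rw [eLpNorm_eq_lintegral_rpow_enorm_toReal hp0 hp, hqdef, one_div]
      rfl
    have h2 : eLpNorm (f : Ω → 𝕜) p μ
        = (∫⁻ x, (‖f x‖₊ : ℝ≥0∞) ^ q ∂μ) ^ (q⁻¹) := by
      rw [eLpNorm_eq_lintegral_rpow_enorm_toReal hp0 hp, hqdef, one_div]
      rfl
    rw [h1, h2]
    calc (∫⁻ x, (‖((Mu + Mv) f : Ω → 𝕜) x‖₊ : ℝ≥0∞) ^ q ∂μ) ^ (q⁻¹)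
        ≤ ((C : ℝ≥0∞) ^ q * ∫⁻ x, (‖f x‖₊ : ℝ≥0∞) ^ q ∂μ) ^ (q⁻¹) :=
          ENNReal.rpow_le_rpow total (inv_nonneg.mpr hq.le)
      _ = ((C : ℝ≥0∞) ^ q) ^ (q⁻¹) * ((∫⁻ x, (‖f x‖₊ : ℝ≥0∞) ^ q ∂μ)) ^ (q⁻¹) :=
          ENNReal.mul_rpow_of_nonneg _ _ (inv_nonneg.mpr hq.le)
      _ = (C : ℝ≥0∞) * ((∫⁻ x, (‖f x‖₊ : ℝ≥0∞) ^ q ∂μ)) ^ (q⁻¹) := by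
          rw [← ENNReal.rpow_mul, mul_inv_cancel₀ hq.ne', ENNReal.rpow_one]
  rw [Lp.norm_def, Lp.norm_def]
  have hne : (C : ℝ≥0∞) * eLpNorm (f : Ω → 𝕜) p μ ≠ ∞ :=
    ENNReal.mul_ne_top ENNReal.coe_ne_top (Lp.eLpNorm_ne_top f)
  calc (eLpNorm (((Mu + Mv) f : Lp 𝕜 p μ) : Ω → 𝕜) p μ).toReal
      ≤ ((C : ℝ≥0∞) * eLpNorm (f : Ω → 𝕜) p μ).toReal := ENNReal.toReal_mono hne final
    _ = ‖Mu + K‖ * (eLpNorm (f : Ω → 𝕜) p μ).toReal := by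
        rw [ENNReal.toReal_mul, ENNReal.coe_toReal, hC, coe_nnnorm]
end

section
/- Let (Ω,𝒜,μ) be a σ-finite measure space, 1 ≤ p < ∞, with conjugate exponent q (1/p + 1/q = 1), and let (B_n)_{n∈ℕ} be pairwise disjoint measurable sets with Ω = ⋃_{n∈ℕ} B_n, where each B_n is either an atom of μ or a μ-null set. Fix j ∈ ℕ, let η ∈ L_q(μ) with η ≥ 0, and define the positive rank-one operator K on L_p(μ) by K f := (∫_{Ω \ B_j} f η dμ) · 1_{B_j}. If u ∈ L∞(μ) with u ≥ 0 satisfies M_u f ≤ K f for all f ∈ L_p(μ) with f ≥ 0, then u = 0 (a.e.). -/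
open MeasureTheory Filter ENNReal

theorem stmt12 {Ω : Type*} [MeasurableSpace Ω]
    (μ : Measure Ω) [SigmaFinite μ]
    (p q : ℝ≥0∞) (hp1 : 1 ≤ p) (hp : p ≠ ∞) (hpq : 1 / p + 1 / q = 1)
    (B : ℕ → Set Ω) (hBmeas : ∀ n, MeasurableSet (B n))
    (hBdisj : Pairwise (Function.onFun Disjoint B)) (hBunion : (⋃ n, B n) = Set.univ)
    (hBatom : ∀ n, IsAtomSet μ (B n) ∨ μ (B n) = 0)
    (j : ℕ) (η : Ω → ℝ) (hη : MemLp η q μ) (hη0 : 0 ≤ᵐ[μ] η)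
    (u : Ω → ℝ) (hu : MemLp u ∞ μ) (hu0 : 0 ≤ᵐ[μ] u)
    (hle : ∀ f : Ω → ℝ, MemLp f p μ → 0 ≤ᵐ[μ] f →
      ∀ᵐ x ∂μ, u x * f x ≤ (∫ y in (B j)ᶜ, f y * η y ∂μ) *
        (B j).indicator (fun _ => (1 : ℝ)) x) :
    u =ᵐ[μ] 0 := by
  have key : ∀ n, ∀ᵐ x ∂μ, x ∈ spanningSets μ n → u x ≤ 0 := by
    intro n
    have hSmeas : MeasurableSet (spanningSets μ n) := measurableSet_spanningSets μ n
    have hSfin : μ (spanningSets μ n) < ∞ := measure_spanningSets_lt_top μ n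
    -- first test function : indicator of B j ∩ S n
    have hmeas1 : MeasurableSet (B j ∩ spanningSets μ n) := (hBmeas j).inter hSmeas
    have hmem1 : MemLp ((B j ∩ spanningSets μ n).indicator fun _ => (1:ℝ)) p μ :=
      memLp_indicator_const p hmeas1 1
        (Or.inr ((lt_of_le_of_lt (measure_mono Set.inter_subset_right) hSfin).ne))
    have h1 := hle _ hmem1
      (Eventually.of_forall fun x => Set.indicator_nonneg (fun _ _ => zero_le_one) x)
    have hc1 : (∫ y in (B j)ᶜ,
        ((B j ∩ spanningSets μ n).indicator fun _ => (1:ℝ)) y * η y ∂μ) = 0 := by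
      apply setIntegral_eq_zero_of_forall_eq_zero
      intro x hx
      rw [Set.indicator_of_notMem (fun h => hx h.1), zero_mul]
    -- second test function : indicator of (B j)ᶜ ∩ S n
    have hmeas2 : MeasurableSet ((B j)ᶜ ∩ spanningSets μ n) := (hBmeas j).compl.inter hSmeas
    have hmem2 : MemLp (((B j)ᶜ ∩ spanningSets μ n).indicator fun _ => (1:ℝ)) p μ :=
      memLp_indicator_const p hmeas2 1
        (Or.inr ((lt_of_le_of_lt (measure_mono Set.inter_subset_right) hSfin).ne))
    have h2 := hle _ hmem2
      (Eventually.of_forall fun x => Set.indicator_nonneg (fun _ _ => zero_le_one) x)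
    filter_upwards [h1, h2] with x hx1 hx2 hxS
    by_cases hxB : x ∈ B j
    · rw [hc1, zero_mul, Set.indicator_of_mem (Set.mem_inter hxB hxS), mul_one] at hx1
      exact hx1
    · rw [Set.indicator_of_mem (Set.mem_inter (Set.mem_compl hxB) hxS), mul_one,
        Set.indicator_of_notMem hxB, mul_zero] at hx2
      exact hx2
  have hall : ∀ᵐ x ∂μ, ∀ n, x ∈ spanningSets μ n → u x ≤ 0 := ae_all_iff.2 key
  filter_upwards [hu0, hall] with x h0 hx
  have hmem : x ∈ ⋃ n, spanningSets μ n := by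
    rw [iUnion_spanningSets]; trivial
  obtain ⟨n, hn⟩ := Set.mem_iUnion.1 hmem
  exact le_antisymm (hx n hn) h0
end
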